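/- Let G be a topological group acting continuously on itself by left multiplication. Then the compact-open topology on G induced by this action (subbasic open sets [K, O] = {g : gK ⊆ O} for K ⊆ G compact, O ⊆ G open) coincides with the original topology of G. -/

import Mathlib

open Topology Filter Pointwise


/-- For the left translation action of a topological group on itself, the
compact-open topology (subbasic sets `[K, O] = {g | ∀ x ∈ K, g * x ∈ O}` for `K`
compact, `O` open) coincides with the original topology of `G`. -/
theorem stmt_6 {G : Type*} [Group G] [ts : TopologicalSpace G] [IsTopologicalGroup G] :
    TopologicalSpace.generateFrom
      {S : Set G | ∃ (K O : Set G), IsCompact K ∧ IsOpen O ∧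
        S = {g : G | ∀ x ∈ K, g * x ∈ O}} = ts := by
  apply le_antisymm
  · -- generateFrom ≤ ts : each ts-open set is subbasic with K = {1}
    intro U hU
    apply TopologicalSpace.isOpen_generateFrom_of_mem
    refine ⟨{1}, U, isCompact_singleton, hU, ?_⟩
    ext g; simp
  · -- ts ≤ generateFrom : each subbasic set is open in ts
    apply le_generateFrom
    rintro S ⟨K, O, hK, hO, rfl⟩
    rw [isOpen_iff_mem_nhds]
    intro g hg
    have hgK : IsCompact ((g * ·) '' K) := hK.image (continuous_mul_left g)
    have hsub : (g * ·) '' K ⊆ O := by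
      rintro _ ⟨x, hx, rfl⟩; exact hg x hx
    obtain ⟨V, hV, hVO⟩ := compact_open_separated_mul_left hgK hO hsub
    have : V * ({g} : Set G) ∈ 𝓝 g := by
      have : (· * g) '' V ∈ 𝓝 g := by
        have := (Homeomorph.mulRight g).isOpenMap.image_mem_nhds
          (by simpa using hV)
        simpa using this
      simpa [Set.mul_singleton] using this
    refine Filter.mem_of_superset this ?_
    rintro h ⟨v, hv, g', hg', rfl⟩
    simp only [Set.mem_singleton_iff] at hg'
    intro x hx
    have : v * (g * x) ∈ O := hVO (Set.mul_mem_mul hv ⟨x, hx, rfl⟩)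
    rw [hg']
    simpa [mul_assoc] using this
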